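/- arXiv:2110.12616 — 4 statements merged into one kernel-verified Lean document; each statement's English description precedes it below -/
import Mathlib

section
/- The spectral norm of the adjacency matrix of the sensitivity graph of the threshold function T_k on n bits (1 ≤ k ≤ n) is at least sqrt(k · (n+1-k)). -/
open Finset

/-- Hamming weight of a Boolean string. -/
def wt {n : ℕ} (x : Fin n → Bool) : ℕ := (univ.filter (fun i => x i = true)).card

/-- The threshold function with threshold `k` on `n` bits. -/
def Tk (n k : ℕ) (x : Fin n → Bool) : Bool := decide (k ≤ wt x)

/-- Flip the `i`-th bit of `x`. -/
def flipBit {n : ℕ} (x : Fin n → Bool) (i : Fin n) : Fin n → Bool := Function.update x i (!x i)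

/-- Sensitivity of `f` at input `x`. -/
def sens {n : ℕ} (f : (Fin n → Bool) → Bool) (x : Fin n → Bool) : ℕ :=
  (univ.filter (fun i => f (flipBit x i) ≠ f x)).card

/-- Adjacency matrix of the sensitivity graph of `f`. -/
def adjMat {n : ℕ} (f : (Fin n → Bool) → Bool) : Matrix (Fin n → Bool) (Fin n → Bool) ℝ :=
  fun x y => if hammingDist x y = 1 ∧ f x ≠ f y then 1 else 0

/-- Euclidean norm of a real vector indexed by a finite type. -/
noncomputable def enorm {ι : Type*} [Fintype ι] (v : ι → ℝ) : ℝ :=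
  Real.sqrt (∑ i, v i ^ 2)

/-- Spectral norm of a real matrix, as the maximal stretch of a nonzero vector. -/
noncomputable def specNorm {ι : Type*} [Fintype ι] [DecidableEq ι] (A : Matrix ι ι ℝ) : ℝ :=
  sSup {r : ℝ | ∃ v : ι → ℝ, v ≠ 0 ∧ r = _root_.enorm (A.mulVec v) / _root_.enorm v}

lemma flip_ne {n : ℕ} (x : Fin n → Bool) (i : Fin n) : flipBit x i i ≠ x i := by
  simp [flipBit]

lemma flip_eq {n : ℕ} (x : Fin n → Bool) (i j : Fin n) (h : j ≠ i) : flipBit x i j = x j := by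
  simp [flipBit, Function.update_of_ne h]

lemma dist_flip {n : ℕ} (x : Fin n → Bool) (i : Fin n) : hammingDist x (flipBit x i) = 1 := by
  rw [hammingDist]
  have : (univ.filter (fun j => x j ≠ flipBit x i j)) = {i} := by
    ext j
    simp only [mem_filter, mem_univ, true_and, mem_singleton]
    constructor
    · intro h
      by_contra hj
      exact h (flip_eq x i j hj).symm
    · rintro rfl
      exact fun h => flip_ne x _ h.symm
  rw [this, card_singleton]

lemma eq_flip_of_dist_one {n : ℕ} (x y : Fin n → Bool) (h : hammingDist x y = 1) :
    ∃ i, y = flipBit x i := by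
  rw [hammingDist, Finset.card_eq_one] at h
  obtain ⟨i, hi⟩ := h
  refine ⟨i, funext fun j => ?_⟩
  by_cases hj : j = i
  · subst hj
    have : j ∈ univ.filter (fun j => x j ≠ y j) := by rw [hi]; exact mem_singleton_self j
    simp only [mem_filter] at this
    have := this.2
    cases hx : x j <;> cases hy : y j <;> simp_all [flipBit]
  · have : j ∉ univ.filter (fun j' => x j' ≠ y j') := by rw [hi]; simpa using hj
    simp only [mem_filter, mem_univ, true_and, not_not] at this
    rw [flip_eq x i j hj, this]

lemma wt_flip_true {n : ℕ} (x : Fin n → Bool) (i : Fin n) (h : x i = true) :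
    wt (flipBit x i) + 1 = wt x := by
  have : (univ.filter (fun j => x j = true)) = insert i (univ.filter (fun j => flipBit x i j = true)) := by
    ext j
    by_cases hj : j = i
    · subst hj; simp [h]
    · simp [hj, flip_eq x i j hj]
  rw [wt, wt, this, card_insert_of_notMem (by simp [flipBit, h])]

lemma wt_flip_false {n : ℕ} (x : Fin n → Bool) (i : Fin n) (h : x i = false) :
    wt (flipBit x i) = wt x + 1 := by
  have h' : flipBit x i i = true := by simp [flipBit, h]
  have := wt_flip_true (flipBit x i) i h'
  have hx : flipBit (flipBit x i) i = x := by
    funext j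
    by_cases hj : j = i
    · subst hj; simp [flipBit]
    · rw [flip_eq _ i j hj, flip_eq _ i j hj]
  rw [hx] at this
  omega

lemma card_wt_eq (n m : ℕ) :
    (univ.filter (fun x : Fin n → Bool => wt x = m)).card = n.choose m := by
  have hpc := Finset.card_powersetCard m (univ : Finset (Fin n))
  rw [Finset.card_univ, Fintype.card_fin] at hpc
  rw [← hpc]
  refine Finset.card_bij' (fun x _ => univ.filter (fun i => x i = true))
      (fun s _ => (fun i => decide (i ∈ s))) ?_ ?_ ?_ ?_
  · intro x hx
    simp only [mem_filter, mem_univ, true_and] at hx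
    rw [Finset.mem_powersetCard]
    exact ⟨Finset.subset_univ _, hx⟩
  · intro s hs
    rw [Finset.mem_powersetCard] at hs
    rw [Finset.mem_filter]
    simp only [mem_filter, mem_univ, true_and, wt]
    rw [← hs.2]
    congr 1
    ext i
    simp
  · intro x hx
    funext i
    simp
  · intro s hs
    ext i
    simp

lemma mulVec_eq (n k : ℕ) (hk1 : 1 ≤ k) (x : Fin n → Bool) :
    (adjMat (Tk n k)).mulVec (fun y => if wt y = k - 1 then 1 else 0) x
      = if wt x = k then (k : ℝ) else 0 := by
  rw [Matrix.mulVec, dotProduct]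
  have key : ∀ y : Fin n → Bool,
      adjMat (Tk n k) x y * (if wt y = k - 1 then (1:ℝ) else 0)
      = if (hammingDist x y = 1 ∧ Tk n k x ≠ Tk n k y) ∧ wt y = k - 1 then 1 else 0 := by
    intro y
    rw [adjMat]
    by_cases h1 : hammingDist x y = 1 ∧ Tk n k x ≠ Tk n k y <;>
      by_cases h2 : wt y = k - 1 <;> simp [h1, h2]
  simp_rw [key, Finset.sum_boole]
  by_cases hx : wt x = k
  · rw [if_pos hx]
    have himg : univ.filter (fun y => (hammingDist x y = 1 ∧ Tk n k x ≠ Tk n k y) ∧ wt y = k - 1)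
        = Finset.image (flipBit x) (univ.filter (fun i => x i = true)) := by
      ext y
      simp only [mem_filter, mem_univ, true_and, Finset.mem_image]
      constructor
      · rintro ⟨⟨hd, _⟩, hw⟩
        obtain ⟨i, rfl⟩ := eq_flip_of_dist_one x _ hd
        refine ⟨i, ?_, rfl⟩
        cases hxi : x i with
        | true => rfl
        | false => rw [wt_flip_false x i hxi] at hw; omega
      · rintro ⟨i, hi, rfl⟩
        have hw : wt (flipBit x i) = k - 1 := by
          have := wt_flip_true x i hi; omega
        refine ⟨⟨dist_flip x i, ?_⟩, hw⟩
        rw [Tk, Tk, hx, hw]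
        simp only [ne_eq, decide_eq_decide]
        omega
    rw [himg, Finset.card_image_of_injective _ ?_, ← wt, hx]
    intro i j hij
    by_contra hne
    have h1 : flipBit x i i = flipBit x j i := by rw [hij]
    rw [flip_eq x j i hne] at h1
    exact flip_ne x i h1
  · rw [if_neg hx]
    have : univ.filter (fun y => (hammingDist x y = 1 ∧ Tk n k x ≠ Tk n k y) ∧ wt y = k - 1)
        = ∅ := by
      rw [Finset.eq_empty_iff_forall_notMem]
      intro y hy
      simp only [mem_filter, mem_univ, true_and] at hy
      obtain ⟨⟨hd, hT⟩, hw⟩ := hy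
      obtain ⟨i, rfl⟩ := eq_flip_of_dist_one x _ hd
      have hTy : Tk n k (flipBit x i) = false := by
        rw [Tk, hw, decide_eq_false]; omega
      have hTx : Tk n k x = true := by
        cases h : Tk n k x
        · rw [hTy, h] at hT; exact absurd rfl hT
        · rfl
      rw [Tk, decide_eq_true_eq] at hTx
      cases hxi : x i with
      | true => have := wt_flip_true x i hxi; omega
      | false => have := wt_flip_false x i hxi; omega
    rw [this, Finset.card_empty, Nat.cast_zero]

lemma enorm_pos_vec {ι : Type*} [Fintype ι] (v : ι → ℝ) (hv : v ≠ 0) : 0 < _root_.enorm v := by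
  obtain ⟨i, hi⟩ := Function.ne_iff.mp hv
  rw [_root_.enorm, Real.sqrt_pos]
  have h1 : v i ^ 2 ≤ ∑ j, v j ^ 2 :=
    Finset.single_le_sum (fun j _ => sq_nonneg (v j)) (mem_univ i)
  have h2 : 0 < v i ^ 2 := lt_of_le_of_ne (sq_nonneg _) (Ne.symm (pow_ne_zero 2 hi))
  linarith

lemma specSet_bdd {ι : Type*} [Fintype ι] [DecidableEq ι] (A : Matrix ι ι ℝ) :
    BddAbove {r : ℝ | ∃ v : ι → ℝ, v ≠ 0 ∧ r = _root_.enorm (A.mulVec v) / _root_.enorm v} := by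
  refine ⟨Real.sqrt (∑ x, ∑ y, A x y ^ 2), ?_⟩
  rintro r ⟨v, hv, rfl⟩
  rw [div_le_iff₀ (enorm_pos_vec v hv), _root_.enorm, _root_.enorm, ← Real.sqrt_mul (by positivity)]
  apply Real.sqrt_le_sqrt
  calc ∑ x, (A.mulVec v x) ^ 2
      ≤ ∑ x, ((∑ y, A x y ^ 2) * (∑ y, v y ^ 2)) := by
        apply Finset.sum_le_sum; intro x _
        show (∑ y, A x y * v y) ^ 2 ≤ _
        exact Finset.sum_mul_sq_le_sq_mul_sq univ _ _
    _ = (∑ x, ∑ y, A x y ^ 2) * ∑ y, v y ^ 2 := by rw [Finset.sum_mul]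

theorem specNorm_threshold_lower (n k : ℕ) (hk1 : 1 ≤ k) (hkn : k ≤ n) :
    Real.sqrt ((k : ℝ) * ((n : ℝ) + 1 - k)) ≤ specNorm (adjMat (Tk n k)) := by
  set v : (Fin n → Bool) → ℝ := fun y => if wt y = k - 1 then 1 else 0 with hv
  have hvne : v ≠ 0 := by
    have hpos : 0 < (univ.filter (fun x : Fin n → Bool => wt x = k - 1)).card := by
      rw [card_wt_eq]; exact Nat.choose_pos (by omega)
    obtain ⟨y, hy⟩ := Finset.card_pos.mp hpos
    simp only [mem_filter, mem_univ, true_and] at hy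
    intro h
    have := congrFun h y
    simp [hv, hy] at this
  have hsumv : ∑ y, v y ^ 2 = (n.choose (k - 1) : ℝ) := by
    have : ∀ y, v y ^ 2 = if wt y = k - 1 then (1:ℝ) else 0 := by
      intro y; by_cases h : wt y = k - 1 <;> simp [hv, h]
    simp_rw [this, Finset.sum_boole, card_wt_eq]
  have hAv : (adjMat (Tk n k)).mulVec v = fun x => if wt x = k then (k : ℝ) else 0 :=
    funext (mulVec_eq n k hk1)
  have hsumAv : ∑ x, ((adjMat (Tk n k)).mulVec v x) ^ 2 = (k : ℝ)^2 * (n.choose k : ℝ) := by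
    rw [hAv]
    have : ∀ x : Fin n → Bool, (if wt x = k then (k : ℝ) else 0) ^ 2
        = (k:ℝ)^2 * (if wt x = k then (1:ℝ) else 0) := by
      intro x; by_cases h : wt x = k <;> simp [h]
    simp_rw [this, ← Finset.mul_sum, Finset.sum_boole, card_wt_eq]
  have hC1pos : (0:ℝ) < (n.choose (k-1) : ℝ) := by
    exact_mod_cast Nat.choose_pos (show k - 1 ≤ n by omega)
  have hkey : (n.choose k : ℝ) * k = (n.choose (k-1) : ℝ) * ((n:ℝ) + 1 - k) := by
    have h := Nat.choose_succ_right_eq n (k-1)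
    have hk : k - 1 + 1 = k := by omega
    rw [hk] at h
    have hcast : ((n - (k-1) : ℕ) : ℝ) = (n:ℝ) + 1 - k := by
      have h1 : ((n - (k-1) : ℕ) : ℝ) = (n:ℝ) - ((k-1 : ℕ):ℝ) := by
        exact_mod_cast Nat.cast_sub (by omega)
      have h2 : ((k-1 : ℕ):ℝ) = (k:ℝ) - 1 := by
        have : ((k - 1 : ℕ) : ℝ) = (k:ℝ) - ((1:ℕ):ℝ) := Nat.cast_sub hk1
        simpa using this
      rw [h1, h2]; ring
    calc (n.choose k : ℝ) * k = ((n.choose k * k : ℕ) : ℝ) := by push_cast; ring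
      _ = ((n.choose (k-1) * (n - (k-1)) : ℕ) : ℝ) := by rw [h]
      _ = (n.choose (k-1) : ℝ) * ((n:ℝ) + 1 - k) := by push_cast [hcast]; ring
  have hratio : Real.sqrt ((k : ℝ) * ((n : ℝ) + 1 - k))
      = _root_.enorm ((adjMat (Tk n k)).mulVec v) / _root_.enorm v := by
    rw [_root_.enorm, _root_.enorm, hsumAv, hsumv, ← Real.sqrt_div (by positivity)]
    congr 1
    field_simp
    nlinarith [hkey]
  rw [hratio]
  exact le_csSup (specSet_bdd _) ⟨v, hvne, rfl⟩
end

section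
/- Let f : {0,1}^n → {0,1} be symmetric and non-constant, n ≥ 2, with t = t_f the minimum value such that f is constant on Hamming weights in [t, n-t]. Define w(x,i) = sqrt(n/t) if (|x| < t and x_i = 1) or (|x| > n - t and x_i = 0), w(x,i) = sqrt(t/n) if (|x| < t and x_i = 0) or (|x| > n - t and x_i = 1); for t ≤ |x| ≤ n - t, set w(x,i) = sqrt(n/t) on some fixed t indices with x_i = 1 and some fixed t indices with x_i = 0, and w(x,i) = 0 elsewhere. Then for all x, y with f(x) ≠ f(y), the sum over i with x_i ≠ y_i of sqrt(w(x,i) · w(y,i)) is at least 1. -/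
open Finset

theorem weight_scheme_feasible (n t : ℕ) (hn : 2 ≤ n) (htn : 2 * t ≤ n)
    (g : ℕ → Bool) (f : (Fin n → Bool) → Bool) (hf : ∀ x, f x = g (wt x))
    (hnc : ∃ x y : Fin n → Bool, f x ≠ f y)
    (ht : IsLeast {s : ℕ | ∀ a b : ℕ, s ≤ a → a ≤ n - s → s ≤ b → b ≤ n - s → g a = g b} t)
    (w : (Fin n → Bool) → Fin n → ℝ)
    (hleft : ∀ x, wt x < t → ∀ i, w x i =
      if x i then Real.sqrt ((n : ℝ) / t) else Real.sqrt ((t : ℝ) / n))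
    (hright : ∀ x, n - t < wt x → ∀ i, w x i =
      if x i then Real.sqrt ((t : ℝ) / n) else Real.sqrt ((n : ℝ) / t))
    (hmid : ∀ x, t ≤ wt x → wt x ≤ n - t →
      ∃ S1 S0 : Finset (Fin n), S1.card = t ∧ S0.card = t ∧
        (∀ i ∈ S1, x i = true) ∧ (∀ i ∈ S0, x i = false) ∧
        (∀ i, w x i = if i ∈ S1 ∪ S0 then Real.sqrt ((n : ℝ) / t) else 0)) :
    ∀ x y : Fin n → Bool, f x ≠ f y →
      1 ≤ ∑ i ∈ univ.filter (fun i => x i ≠ y i), Real.sqrt (w x i * w y i) := by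
  -- basic facts
  have hwle : ∀ z : Fin n → Bool, wt z ≤ n := fun z =>
    le_trans (card_filter_le _ _) (by simp)
  have ht1 : 1 ≤ t := by
    rcases Nat.eq_zero_or_pos t with h0 | h; swap
    · exact h
    exfalso
    obtain ⟨x, y, hxy⟩ := hnc
    apply hxy
    rw [hf x, hf y]
    subst h0
    exact ht.1 (wt x) (wt y) (Nat.zero_le _) (by simpa using hwle x)
      (Nat.zero_le _) (by simpa using hwle y)
  have hn0 : (0:ℝ) < n := by exact_mod_cast (by omega : 0 < n)
  have ht0 : (0:ℝ) < t := by exact_mod_cast ht1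
  set q : ℝ := Real.sqrt ((n : ℝ) / t) with hqdef
  set r : ℝ := Real.sqrt ((t : ℝ) / n) with hrdef
  have hqrmul : q * r = 1 := by
    rw [hqdef, hrdef, ← Real.sqrt_mul (by positivity),
      show ((n:ℝ)/t) * ((t:ℝ)/n) = 1 by field_simp, Real.sqrt_one]
  have hqr : Real.sqrt (q * r) = 1 := by rw [hqrmul, Real.sqrt_one]
  have hrq : Real.sqrt (r * q) = 1 := by rw [mul_comm, hqrmul, Real.sqrt_one]
  have hrr : Real.sqrt (r * r) = r := Real.sqrt_mul_self (Real.sqrt_nonneg _)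
  -- counting lemma
  have hcount : ∀ a b : Fin n → Bool,
      wt b ≤ wt a + (univ.filter (fun i => a i = false ∧ b i = true)).card := by
    intro a b
    have hsub : univ.filter (fun i => b i = true) ⊆
        univ.filter (fun i => a i = true) ∪
          univ.filter (fun i => a i = false ∧ b i = true) := by
      intro i hi
      simp only [mem_filter, mem_univ, true_and, mem_union] at hi ⊢
      cases h : a i
      · exact Or.inr ⟨rfl, hi⟩
      · exact Or.inl rfl
    exact le_trans (card_le_card hsub) (card_union_le _ _)
  -- main claim for ordered pairs
  suffices H : ∀ x y : Fin n → Bool, f x ≠ f y → wt x ≤ wt y →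
      1 ≤ ∑ i ∈ univ.filter (fun i => x i ≠ y i), Real.sqrt (w x i * w y i) by
    intro x y hxy
    rcases le_total (wt x) (wt y) with h | h
    · exact H x y hxy h
    · calc (1:ℝ) ≤ ∑ i ∈ univ.filter (fun i => y i ≠ x i), Real.sqrt (w y i * w x i) :=
            H y x hxy.symm h
        _ = ∑ i ∈ univ.filter (fun i => x i ≠ y i), Real.sqrt (w x i * w y i) := by
            apply Finset.sum_congr
            · apply Finset.filter_congr
              intro i _
              simp [ne_comm]
            · intro i _
              rw [mul_comm]
  intro x y hxy hle
  have hgxy : g (wt x) ≠ g (wt y) := by rw [← hf x, ← hf y]; exact hxy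
  have key : ∀ i : Fin n, x i ≠ y i → 1 ≤ Real.sqrt (w x i * w y i) →
      1 ≤ ∑ i ∈ univ.filter (fun i => x i ≠ y i), Real.sqrt (w x i * w y i) := by
    intro i hi hterm
    have hmem : i ∈ univ.filter (fun j => x j ≠ y j) := by
      simp only [mem_filter, mem_univ, true_and]; exact hi
    exact le_trans hterm
      (Finset.single_le_sum (f := fun j => Real.sqrt (w x j * w y j))
        (fun j _ => Real.sqrt_nonneg _) hmem)
  have hneq : ∃ i, x i ≠ y i := by
    by_contra h
    push_neg at h
    exact hxy (congrArg f (funext h))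
  rcases lt_or_ge (wt x) t with hx1 | hx1
  · rcases lt_or_ge (wt y) t with hy1 | hy1
    · -- both left
      obtain ⟨i, hi⟩ := hneq
      apply key i hi
      rw [hleft x hx1 i, hleft y hy1 i]
      cases hb : x i
      · have hyb : y i = true := by
          cases hc : y i
          · exact absurd (hb.trans hc.symm) hi
          · rfl
        simp only [hb, hyb, if_true, if_false, Bool.false_eq_true]
        rw [hrq]
      · have hyb : y i = false := by
          cases hc : y i
          · rfl
          · exact absurd (hb.trans hc.symm) hi
        simp only [hb, hyb, if_true, if_false, Bool.false_eq_true]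
        rw [hqr]
    · rcases le_or_gt (wt y) (n - t) with hy2 | hy2
      · -- x left, y mid
        obtain ⟨S1, S0, hS1c, hS0c, hS1, hS0, hw⟩ := hmid y hy1 hy2
        have hex : ∃ i ∈ S1, x i = false := by
          by_contra h
          push_neg at h
          have hsub : S1 ⊆ univ.filter (fun i => x i = true) := by
            intro i hi
            simp only [mem_filter, mem_univ, true_and]
            cases hc : x i
            · exact absurd hc (h i hi)
            · rfl
          have h2 : t ≤ wt x := by
            rw [← hS1c]
            exact card_le_card hsub
          omega
        obtain ⟨i, hiS1, hxi⟩ := hex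
        have hyi : y i = true := hS1 i hiS1
        apply key i (by rw [hxi, hyi]; simp)
        rw [hleft x hx1 i, hw i, hxi, if_pos (mem_union_left _ hiS1)]
        simp only [Bool.false_eq_true, if_false]
        rw [hrq]
      · -- x left, y right : counting case
        set B := univ.filter (fun i => x i = false ∧ y i = true) with hB
        have hBsub : B ⊆ univ.filter (fun i => x i ≠ y i) := by
          intro i hi
          simp only [hB, mem_filter, mem_univ, true_and] at hi ⊢
          rw [hi.1, hi.2]
          simp
        have hterm : ∀ i ∈ B, Real.sqrt (w x i * w y i) = r := by
          intro i hi
          simp only [hB, mem_filter, mem_univ, true_and] at hi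
          rw [hleft x hx1 i, hright y hy2 i, hi.1, hi.2]
          simp only [if_true, Bool.false_eq_true, if_false]
          exact hrr
        have hb2 : n + 2 ≤ 2 * t + B.card := by
          have hc := hcount x y
          rw [← hB] at hc
          omega
        have hbge2 : 2 ≤ B.card := by omega
        have hkey : n ≤ B.card * B.card * t := by
          rcases le_or_gt n (4 * t) with h4 | h4
          · calc n ≤ 4 * t := h4
              _ ≤ B.card * B.card * t :=
                Nat.mul_le_mul_right _ (Nat.mul_le_mul hbge2 hbge2)
          · have h5 : n + 5 ≤ 2 * B.card := by omega
            have h6 : 4 * n ≤ (2 * B.card) * (2 * B.card) :=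
              le_trans (by nlinarith) (Nat.mul_le_mul h5 h5)
            have h7 : n ≤ B.card * B.card := by nlinarith
            calc n ≤ B.card * B.card := h7
              _ = B.card * B.card * 1 := (mul_one _).symm
              _ ≤ B.card * B.card * t := Nat.mul_le_mul_left _ ht1
        have h1 : (1:ℝ) ≤ (B.card : ℝ)^2 * ((t:ℝ)/n) := by
          rw [show (B.card:ℝ)^2 * ((t:ℝ)/n) = ((B.card:ℝ)^2 * t)/n by ring,
            le_div_iff₀ hn0, one_mul]
          have h8 : n ≤ B.card ^ 2 * t := by rw [pow_two]; exact hkey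
          exact_mod_cast h8
        calc (1:ℝ) = Real.sqrt 1 := Real.sqrt_one.symm
          _ ≤ Real.sqrt ((B.card : ℝ)^2 * ((t:ℝ)/n)) := Real.sqrt_le_sqrt h1
          _ = (B.card : ℝ) * r := by
              rw [Real.sqrt_mul (by positivity), Real.sqrt_sq (by positivity), hrdef]
          _ = ∑ i ∈ B, Real.sqrt (w x i * w y i) := by
              rw [Finset.sum_congr rfl hterm, Finset.sum_const, nsmul_eq_mul]
          _ ≤ ∑ i ∈ univ.filter (fun i => x i ≠ y i), Real.sqrt (w x i * w y i) :=
              Finset.sum_le_sum_of_subset_of_nonneg hBsub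
                (fun i _ _ => Real.sqrt_nonneg _)
  · have hy1 : t ≤ wt y := le_trans hx1 hle
    rcases le_or_gt (wt y) (n - t) with hy2 | hy2
    · -- both mid: contradiction
      exact absurd (ht.1 (wt x) (wt y) hx1 (le_trans hle hy2) hy1 hy2) hgxy
    · rcases le_or_gt (wt x) (n - t) with hx2 | hx2
      · -- x mid, y right
        obtain ⟨S1, S0, hS1c, hS0c, hS1, hS0, hw⟩ := hmid x hx1 hx2
        have hex : ∃ i ∈ S0, y i = true := by
          by_contra h
          push_neg at h
          have hsub : S0 ⊆ univ.filter (fun i => y i = false) := by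
            intro i hi
            simp only [mem_filter, mem_univ, true_and]
            cases hc : y i
            · rfl
            · exact absurd hc (h i hi)
          have hc1 : t ≤ (univ.filter (fun i => y i = false)).card := by
            rw [← hS0c]
            exact card_le_card hsub
          have hdisj : Disjoint (univ.filter (fun i => y i = false))
              (univ.filter (fun i => y i = true)) := by
            rw [Finset.disjoint_left]
            intro i h1 h2
            simp only [mem_filter, mem_univ, true_and] at h1 h2
            rw [h1] at h2
            exact Bool.false_ne_true h2
          have hle2 : (univ.filter (fun i => y i = false)).card + wt y ≤ n := by
            have heq : wt y = (univ.filter (fun i => y i = true)).card := rfl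
            rw [heq, ← Finset.card_union_of_disjoint hdisj]
            exact le_trans (card_le_card (subset_univ _)) (by simp)
          have hwy := hwle y
          omega
        obtain ⟨i, hiS0, hyi⟩ := hex
        have hxi : x i = false := hS0 i hiS0
        apply key i (by rw [hxi, hyi]; simp)
        rw [hw i, if_pos (mem_union_right _ hiS0), hright y hy2 i, hyi, if_pos rfl]
        rw [hqr]
      · -- both right
        obtain ⟨i, hi⟩ := hneq
        apply key i hi
        rw [hright x hx2 i, hright y hy2 i]
        cases hb : x i
        · have hyb : y i = true := by
            cases hc : y i
            · exact absurd (hb.trans hc.symm) hi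
            · rfl
          simp only [hb, hyb, if_true, if_false, Bool.false_eq_true]
          rw [hqr]
        · have hyb : y i = false := by
            cases hc : y i
            · rfl
            · exact absurd (hb.trans hc.symm) hi
          simp only [hb, hyb, if_true, if_false, Bool.false_eq_true]
          rw [hrq]
end

section
/- With the weight scheme w of the previous statement for a symmetric non-constant f with parameter t = t_f ≤ n/2, every input x satisfies Σ_{i ∈ [n]} w(x,i) ≤ C · sqrt(t · n) for an absolute constant C (e.g., C = 3); hence the min-max adversary quantity MM(f) = O(sqrt(t_f · n)). -/
open Finset

/-- The min-max (dual adversary) quantity `MM(f)`. -/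
noncomputable def MMval {n : ℕ} (f : (Fin n → Bool) → Bool) : ℝ :=
  sInf {r : ℝ | ∃ w : (Fin n → Bool) → Fin n → ℝ,
    (∀ x i, 0 ≤ w x i) ∧
    (∀ x y : Fin n → Bool, f x ≠ f y →
      1 ≤ ∑ i ∈ univ.filter (fun i => x i ≠ y i), Real.sqrt (w x i * w y i)) ∧
    (∀ x, ∑ i, w x i ≤ r)}

set_option maxHeartbeats 1000000 in
theorem weight_scheme_sum_bound (n t : ℕ) (hn : 2 ≤ n) (htn : 2 * t ≤ n)
    (g : ℕ → Bool) (f : (Fin n → Bool) → Bool) (hf : ∀ x, f x = g (wt x))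
    (hnc : ∃ x y : Fin n → Bool, f x ≠ f y)
    (ht : IsLeast {s : ℕ | ∀ a b : ℕ, s ≤ a → a ≤ n - s → s ≤ b → b ≤ n - s → g a = g b} t)
    (w : (Fin n → Bool) → Fin n → ℝ)
    (hleft : ∀ x, wt x < t → ∀ i, w x i =
      if x i then Real.sqrt ((n : ℝ) / t) else Real.sqrt ((t : ℝ) / n))
    (hright : ∀ x, n - t < wt x → ∀ i, w x i =
      if x i then Real.sqrt ((t : ℝ) / n) else Real.sqrt ((n : ℝ) / t))
    (hmid : ∀ x, t ≤ wt x → wt x ≤ n - t →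
      ∃ S1 S0 : Finset (Fin n), S1.card = t ∧ S0.card = t ∧
        (∀ i ∈ S1, x i = true) ∧ (∀ i ∈ S0, x i = false) ∧
        (∀ i, w x i = if i ∈ S1 ∪ S0 then Real.sqrt ((n : ℝ) / t) else 0)) :
    (∀ x : Fin n → Bool, ∑ i, w x i ≤ 3 * Real.sqrt ((t : ℝ) * n)) ∧
    MMval f ≤ 3 * Real.sqrt ((t : ℝ) * n) := by
  classical
  have hwtle : ∀ x : Fin n → Bool, wt x ≤ n := by
    intro x
    calc wt x ≤ (univ : Finset (Fin n)).card := card_filter_le _ _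
      _ = n := by simp
  -- t ≥ 1
  have ht1 : 1 ≤ t := by
    rcases Nat.eq_zero_or_pos t with h0 | h
    · exfalso
      obtain ⟨x, y, hxy⟩ := hnc
      apply hxy
      rw [hf x, hf y]
      exact ht.1 (wt x) (wt y) (by omega) (by have := hwtle x; omega) (by omega)
        (by have := hwtle y; omega)
    · exact h
  have htposR : (0:ℝ) < (t:ℝ) := by exact_mod_cast ht1
  have hnposR : (0:ℝ) < (n:ℝ) := by positivity
  have ht1R : (1:ℝ) ≤ (t:ℝ) := by exact_mod_cast ht1
  have htnR : 2 * (t:ℝ) ≤ (n:ℝ) := by exact_mod_cast htn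
  set a := Real.sqrt ((n:ℝ)/t) with ha_def
  set b := Real.sqrt ((t:ℝ)/n) with hb_def
  have ha0 : 0 ≤ a := Real.sqrt_nonneg _
  have hb0 : 0 ≤ b := Real.sqrt_nonneg _
  have hab : a * b = 1 := by
    rw [ha_def, hb_def, ← Real.sqrt_mul (by positivity),
      show (n:ℝ)/t * ((t:ℝ)/n) = 1 by field_simp]
    exact Real.sqrt_one
  have hba : b * a = 1 := by rw [mul_comm]; exact hab
  have hta : (t:ℝ) * a = Real.sqrt ((t:ℝ)*n) := by
    rw [ha_def, show ((t:ℝ)*n) = (t:ℝ)^2 * ((n:ℝ)/t) by field_simp,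
      Real.sqrt_mul (by positivity), Real.sqrt_sq htposR.le]
  have hnb : (n:ℝ) * b = Real.sqrt ((t:ℝ)*n) := by
    rw [hb_def, show ((t:ℝ)*n) = (n:ℝ)^2 * ((t:ℝ)/n) by field_simp,
      Real.sqrt_mul (by positivity), Real.sqrt_sq hnposR.le]
  have hsq0 : 0 ≤ Real.sqrt ((t:ℝ)*n) := Real.sqrt_nonneg _
  -- nonnegativity of w
  have hw0 : ∀ x i, 0 ≤ w x i := by
    intro x i
    by_cases hx1 : wt x < t
    · rw [hleft x hx1 i]; split_ifs <;> assumption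
    · by_cases hx2 : n - t < wt x
      · rw [hright x hx2 i]; split_ifs <;> assumption
      · obtain ⟨S1, S0, _, _, _, _, hwx⟩ := hmid x (le_of_not_gt hx1) (le_of_not_gt hx2)
        rw [hwx i]; split_ifs
        · exact ha0
        · exact le_refl 0
  -- sum bound
  have hsum : ∀ x : Fin n → Bool, ∑ i, w x i ≤ 3 * Real.sqrt ((t:ℝ)*n) := by
    intro x
    by_cases hx1 : wt x < t
    · have e : ∑ i, w x i = ∑ i, (if x i then a else b) :=
        Finset.sum_congr rfl fun i _ => hleft x hx1 i
      rw [e, Finset.sum_ite, Finset.sum_const, Finset.sum_const, nsmul_eq_mul, nsmul_eq_mul]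
      have e1 : ((univ.filter fun i => x i = true).card : ℝ) ≤ (t:ℝ) := by
        exact_mod_cast le_of_lt hx1
      have e2 : ((univ.filter fun i => ¬ x i = true).card : ℝ) ≤ (n:ℝ) := by
        have : (univ.filter fun i => ¬ x i = true).card ≤ n := by
          calc (univ.filter fun i => ¬ x i = true).card ≤ (univ : Finset (Fin n)).card :=
                card_filter_le _ _
            _ = n := by simp
        exact_mod_cast this
      have := mul_le_mul_of_nonneg_right e1 ha0
      have := mul_le_mul_of_nonneg_right e2 hb0
      nlinarith [hta, hnb, hsq0]
    · by_cases hx2 : n - t < wt x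
      · have e : ∑ i, w x i = ∑ i, (if x i then b else a) :=
          Finset.sum_congr rfl fun i _ => hright x hx2 i
        rw [e, Finset.sum_ite, Finset.sum_const, Finset.sum_const, nsmul_eq_mul, nsmul_eq_mul]
        have hcards : (univ.filter fun i => x i = true).card
            + (univ.filter fun i => ¬ x i = true).card = n := by
          rw [Finset.card_filter_add_card_filter_not]; simp
        have e1 : ((univ.filter fun i => x i = true).card : ℝ) ≤ (n:ℝ) := by
          exact_mod_cast hwtle x
        have e2 : ((univ.filter fun i => ¬ x i = true).card : ℝ) ≤ (t:ℝ) := by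
          have hwx : (univ.filter fun i => x i = true).card = wt x := rfl
          have : (univ.filter fun i => ¬ x i = true).card ≤ t := by omega
          exact_mod_cast this
        have := mul_le_mul_of_nonneg_right e1 hb0
        have := mul_le_mul_of_nonneg_right e2 ha0
        nlinarith [hta, hnb, hsq0]
      · obtain ⟨S1, S0, hS1c, hS0c, _, _, hwx⟩ := hmid x (le_of_not_gt hx1) (le_of_not_gt hx2)
        have e : ∑ i, w x i = ∑ i, (if i ∈ S1 ∪ S0 then a else 0) :=
          Finset.sum_congr rfl fun i _ => hwx i
        rw [e, Finset.sum_ite_mem, univ_inter, Finset.sum_const, nsmul_eq_mul]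
        have hcard : ((S1 ∪ S0).card : ℝ) ≤ 2 * (t:ℝ) := by
          have h1 := card_union_le S1 S0
          have : (S1 ∪ S0).card ≤ 2 * t := by omega
          exact_mod_cast this
        have := mul_le_mul_of_nonneg_right hcard ha0
        nlinarith [hta, hsq0]
  -- symmetry of the constraint sum
  have hsymm : ∀ x y : Fin n → Bool,
      (∑ i ∈ univ.filter (fun i => x i ≠ y i), Real.sqrt (w x i * w y i))
      = ∑ i ∈ univ.filter (fun i => y i ≠ x i), Real.sqrt (w y i * w x i) := by
    intro x y
    rw [show (univ.filter fun i => x i ≠ y i) = (univ.filter fun i => y i ≠ x i) from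
      filter_congr fun i _ => by simp [ne_comm]]
    exact Finset.sum_congr rfl fun i _ => by rw [mul_comm]
  -- case LL
  have hLL : ∀ x y : Fin n → Bool, wt x < t → wt y < t → x ≠ y →
      1 ≤ ∑ i ∈ univ.filter (fun i => x i ≠ y i), Real.sqrt (w x i * w y i) := by
    intro x y hx hy hne
    obtain ⟨i, hi⟩ := Function.ne_iff.mp hne
    have himem : i ∈ univ.filter (fun j => x j ≠ y j) := mem_filter.mpr ⟨mem_univ i, hi⟩
    have hterm : Real.sqrt (w x i * w y i) = 1 := by
      rw [hleft x hx i, hleft y hy i]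
      cases hxv : x i <;> cases hyv : y i
      · exact absurd (hxv.trans hyv.symm) hi
      · simp only [Bool.false_eq_true, if_false, if_true, hba, Real.sqrt_one]
      · simp only [Bool.false_eq_true, if_false, if_true, hab, Real.sqrt_one]
      · exact absurd (hxv.trans hyv.symm) hi
    calc (1:ℝ) = Real.sqrt (w x i * w y i) := hterm.symm
      _ ≤ _ := Finset.single_le_sum (f := fun j => Real.sqrt (w x j * w y j))
          (fun j _ => Real.sqrt_nonneg _) himem
  -- case RR
  have hRR : ∀ x y : Fin n → Bool, n - t < wt x → n - t < wt y → x ≠ y →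
      1 ≤ ∑ i ∈ univ.filter (fun i => x i ≠ y i), Real.sqrt (w x i * w y i) := by
    intro x y hx hy hne
    obtain ⟨i, hi⟩ := Function.ne_iff.mp hne
    have himem : i ∈ univ.filter (fun j => x j ≠ y j) := mem_filter.mpr ⟨mem_univ i, hi⟩
    have hterm : Real.sqrt (w x i * w y i) = 1 := by
      rw [hright x hx i, hright y hy i]
      cases hxv : x i <;> cases hyv : y i
      · exact absurd (hxv.trans hyv.symm) hi
      · simp only [Bool.false_eq_true, if_false, if_true, hab, Real.sqrt_one]
      · simp only [Bool.false_eq_true, if_false, if_true, hba, Real.sqrt_one]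
      · exact absurd (hxv.trans hyv.symm) hi
    calc (1:ℝ) = Real.sqrt (w x i * w y i) := hterm.symm
      _ ≤ _ := Finset.single_le_sum (f := fun j => Real.sqrt (w x j * w y j))
          (fun j _ => Real.sqrt_nonneg _) himem
  -- case LM : x left, y middle
  have hLM : ∀ x y : Fin n → Bool, wt x < t → t ≤ wt y → wt y ≤ n - t →
      1 ≤ ∑ i ∈ univ.filter (fun i => x i ≠ y i), Real.sqrt (w x i * w y i) := by
    intro x y hx hy1 hy2
    obtain ⟨S1, S0, hS1c, hS0c, hS1, hS0, hwy⟩ := hmid y hy1 hy2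
    have hex : ∃ i ∈ S1, x i = false := by
      by_contra h
      push_neg at h
      have hsub : S1 ⊆ univ.filter (fun i => x i = true) := by
        intro i hi
        refine mem_filter.mpr ⟨mem_univ i, ?_⟩
        have := h i hi
        revert this; cases x i <;> simp
      have := card_le_card hsub
      rw [hS1c] at this
      exact absurd this (by have hwx : (univ.filter fun i => x i = true).card = wt x := rfl; omega)
    obtain ⟨i, hiS1, hxi⟩ := hex
    have hyi : y i = true := hS1 i hiS1
    have himem : i ∈ univ.filter (fun j => x j ≠ y j) :=
      mem_filter.mpr ⟨mem_univ i, by rw [hxi, hyi]; simp⟩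
    have hterm : Real.sqrt (w x i * w y i) = 1 := by
      rw [hleft x hx i, hwy i, if_neg (by simp [hxi]), if_pos (mem_union_left _ hiS1), hba,
        Real.sqrt_one]
    calc (1:ℝ) = Real.sqrt (w x i * w y i) := hterm.symm
      _ ≤ _ := Finset.single_le_sum (f := fun j => Real.sqrt (w x j * w y j))
          (fun j _ => Real.sqrt_nonneg _) himem
  -- case RM : x right, y middle
  have hRM : ∀ x y : Fin n → Bool, n - t < wt x → t ≤ wt y → wt y ≤ n - t →
      1 ≤ ∑ i ∈ univ.filter (fun i => x i ≠ y i), Real.sqrt (w x i * w y i) := by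
    intro x y hx hy1 hy2
    obtain ⟨S1, S0, hS1c, hS0c, hS1, hS0, hwy⟩ := hmid y hy1 hy2
    have hcards : (univ.filter fun i => x i = true).card
        + (univ.filter fun i => ¬ x i = true).card = n := by
      rw [Finset.card_filter_add_card_filter_not]; simp
    have hex : ∃ i ∈ S0, x i = true := by
      by_contra h
      push_neg at h
      have hsub : S0 ⊆ univ.filter (fun i => ¬ x i = true) := by
        intro i hi
        exact mem_filter.mpr ⟨mem_univ i, h i hi⟩
      have := card_le_card hsub
      rw [hS0c] at this
      have hwx : (univ.filter fun i => x i = true).card = wt x := rfl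
      omega
    obtain ⟨i, hiS0, hxi⟩ := hex
    have hyi : y i = false := hS0 i hiS0
    have himem : i ∈ univ.filter (fun j => x j ≠ y j) :=
      mem_filter.mpr ⟨mem_univ i, by rw [hxi, hyi]; simp⟩
    have hterm : Real.sqrt (w x i * w y i) = 1 := by
      rw [hright x hx i, hwy i, if_pos hxi, if_pos (mem_union_right _ hiS0), hba, Real.sqrt_one]
    calc (1:ℝ) = Real.sqrt (w x i * w y i) := hterm.symm
      _ ≤ _ := Finset.single_le_sum (f := fun j => Real.sqrt (w x j * w y j))
          (fun j _ => Real.sqrt_nonneg _) himem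
  -- case LR : x left, y right
  have hLR : ∀ x y : Fin n → Bool, wt x < t → n - t < wt y →
      1 ≤ ∑ i ∈ univ.filter (fun i => x i ≠ y i), Real.sqrt (w x i * w y i) := by
    intro x y hx hy
    set D1 := univ.filter (fun i => x i = false ∧ y i = true) with hD1
    have hsub : D1 ⊆ univ.filter (fun i => x i ≠ y i) := by
      intro i hi
      rw [hD1, mem_filter] at hi
      refine mem_filter.mpr ⟨mem_univ i, ?_⟩
      rw [hi.2.1, hi.2.2]; simp
    have hcount : wt y ≤ wt x + D1.card := by
      have hsub2 : univ.filter (fun i => y i = true) ⊆ (univ.filter fun i => x i = true) ∪ D1 := by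
        intro i hi
        rw [mem_filter] at hi
        rw [mem_union, hD1, mem_filter, mem_filter]
        cases hxv : x i
        · right; exact ⟨mem_univ i, rfl, hi.2⟩
        · left; exact ⟨mem_univ i, rfl⟩
      calc wt y ≤ ((univ.filter fun i => x i = true) ∪ D1).card := card_le_card hsub2
        _ ≤ wt x + D1.card := card_union_le _ _
    have hcard : n + 2 ≤ D1.card + 2 * t := by
      have := hwtle y
      omega
    have hcardR : ((n:ℝ) - 2*t + 2) ≤ (D1.card : ℝ) := by
      have h2 : (n:ℝ) + 2 ≤ (D1.card : ℝ) + 2*t := by exact_mod_cast hcard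
      linarith
    have hterm : ∀ i ∈ D1, Real.sqrt (w x i * w y i) = b := by
      intro i hi
      rw [hD1, mem_filter] at hi
      rw [hleft x hx i, hright y hy i, if_neg (by simp [hi.2.1]), if_pos hi.2.2]
      exact Real.sqrt_mul_self hb0
    have hsumD1 : ∑ i ∈ D1, Real.sqrt (w x i * w y i) = (D1.card : ℝ) * b := by
      rw [Finset.sum_congr rfl hterm, Finset.sum_const, nsmul_eq_mul]
    have hb2 : b^2 = (t:ℝ)/n := Real.sq_sqrt (by positivity)
    have hc2 : (2:ℝ) ≤ (n:ℝ) - 2*t + 2 := by linarith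
    have hkey : (n:ℝ) ≤ ((n:ℝ) - 2*t + 2)^2 * t := by
      nlinarith [mul_nonneg (by linarith : (0:ℝ) ≤ (n:ℝ) - 2*t)
          (by linarith : (0:ℝ) ≤ 4*(t:ℝ) - 1),
        mul_nonneg (mul_nonneg (by linarith : (0:ℝ) ≤ (n:ℝ) - 2*t)
          (by linarith : (0:ℝ) ≤ (n:ℝ) - 2*t)) htposR.le]
    have hu0 : 0 ≤ ((n:ℝ) - 2*t + 2) * b := mul_nonneg (by linarith) hb0
    have hu2 : 1 ≤ (((n:ℝ) - 2*t + 2) * b)^2 := by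
      rw [mul_pow, hb2, show ((n:ℝ)-2*t+2)^2 * ((t:ℝ)/n) = ((n:ℝ)-2*t+2)^2 * t / n from by ring,
        le_div_iff₀ hnposR]
      linarith
    have h1 : 1 ≤ ((n:ℝ) - 2*t + 2) * b := by nlinarith [hu2, hu0]
    calc (1:ℝ) ≤ ((n:ℝ) - 2*t + 2) * b := h1
      _ ≤ (D1.card : ℝ) * b := mul_le_mul_of_nonneg_right hcardR hb0
      _ = ∑ i ∈ D1, Real.sqrt (w x i * w y i) := hsumD1.symm
      _ ≤ _ := Finset.sum_le_sum_of_subset_of_nonneg hsub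
          (fun i _ _ => Real.sqrt_nonneg _)
  -- the full constraint
  have hconstraint : ∀ x y : Fin n → Bool, f x ≠ f y →
      1 ≤ ∑ i ∈ univ.filter (fun i => x i ≠ y i), Real.sqrt (w x i * w y i) := by
    intro x y hfxy
    have hne : x ≠ y := fun h => hfxy (congrArg f h)
    by_cases hx1 : wt x < t
    · by_cases hy1 : wt y < t
      · exact hLL x y hx1 hy1 hne
      · by_cases hy2 : n - t < wt y
        · exact hLR x y hx1 hy2
        · exact hLM x y hx1 (le_of_not_gt hy1) (le_of_not_gt hy2)
    · by_cases hx2 : n - t < wt x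
      · by_cases hy1 : wt y < t
        · rw [hsymm x y]; exact hLR y x hy1 hx2
        · by_cases hy2 : n - t < wt y
          · exact hRR x y hx2 hy2 hne
          · exact hRM x y hx2 (le_of_not_gt hy1) (le_of_not_gt hy2)
      · by_cases hy1 : wt y < t
        · rw [hsymm x y]; exact hLM y x hy1 (le_of_not_gt hx1) (le_of_not_gt hx2)
        · by_cases hy2 : n - t < wt y
          · rw [hsymm x y]; exact hRM y x hy2 (le_of_not_gt hx1) (le_of_not_gt hx2)
          · exfalso
            apply hfxy
            rw [hf x, hf y]
            exact ht.1 (wt x) (wt y) (le_of_not_gt hx1) (le_of_not_gt hx2)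
              (le_of_not_gt hy1) (le_of_not_gt hy2)
  refine ⟨hsum, ?_⟩
  apply csInf_le
  · refine ⟨0, fun r hr => ?_⟩
    obtain ⟨w', hw0', _, hw2'⟩ := hr
    have h0 : 0 ≤ ∑ i, w' (fun _ => false) i := Finset.sum_nonneg fun i _ => hw0' _ i
    linarith [hw2' (fun _ => false)]
  · exact ⟨w, hw0, hconstraint, hsum⟩
end

section
/- Let f : {0,1}^n → {0,1} be symmetric and non-constant, n ≥ 2, with t = t_f ≤ n/2. The same weight scheme w satisfies the stronger feasibility condition Σ_{i: x_i ≠ y_i} w(x,i) · w(y,i) ≥ 1 for all x, y with f(x) ≠ f(y); hence MM'(f) = O(sqrt(t_f · n)), where MM'(f) uses products w(x,i)w(y,i) instead of sqrt(w(x,i)w(y,i)) in the constraint. -/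
open Finset

/-- The variant `MM'(f)` with products instead of square roots in the constraint. -/
noncomputable def MMval' {n : ℕ} (f : (Fin n → Bool) → Bool) : ℝ :=
  sInf {r : ℝ | ∃ w : (Fin n → Bool) → Fin n → ℝ,
    (∀ x i, 0 ≤ w x i) ∧
    (∀ x y : Fin n → Bool, f x ≠ f y →
      1 ≤ ∑ i ∈ univ.filter (fun i => x i ≠ y i), w x i * w y i) ∧
    (∀ x, ∑ i, w x i ≤ r)}

theorem weight_scheme_product_feasible (n t : ℕ) (hn : 2 ≤ n) (htn : 2 * t ≤ n)
    (g : ℕ → Bool) (f : (Fin n → Bool) → Bool) (hf : ∀ x, f x = g (wt x))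
    (hnc : ∃ x y : Fin n → Bool, f x ≠ f y)
    (ht : IsLeast {s : ℕ | ∀ a b : ℕ, s ≤ a → a ≤ n - s → s ≤ b → b ≤ n - s → g a = g b} t)
    (w : (Fin n → Bool) → Fin n → ℝ)
    (hleft : ∀ x, wt x < t → ∀ i, w x i =
      if x i then Real.sqrt ((n : ℝ) / t) else Real.sqrt ((t : ℝ) / n))
    (hright : ∀ x, n - t < wt x → ∀ i, w x i =
      if x i then Real.sqrt ((t : ℝ) / n) else Real.sqrt ((n : ℝ) / t))
    (hmid : ∀ x, t ≤ wt x → wt x ≤ n - t →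
      ∃ S1 S0 : Finset (Fin n), S1.card = t ∧ S0.card = t ∧
        (∀ i ∈ S1, x i = true) ∧ (∀ i ∈ S0, x i = false) ∧
        (∀ i, w x i = if i ∈ S1 ∪ S0 then Real.sqrt ((n : ℝ) / t) else 0)) :
    (∀ x y : Fin n → Bool, f x ≠ f y →
      1 ≤ ∑ i ∈ univ.filter (fun i => x i ≠ y i), w x i * w y i) ∧
    MMval' f ≤ 3 * Real.sqrt ((t : ℝ) * n) := by
  classical
  have hwt_le : ∀ x : Fin n → Bool, wt x ≤ n := by
    intro x
    have h1 : (univ.filter (fun i => x i = true)).card ≤ (univ : Finset (Fin n)).card :=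
      Finset.card_filter_le _ _
    simpa [wt] using h1
  -- t ≥ 1
  have ht1 : 1 ≤ t := by
    by_contra h
    push_neg at h
    have ht0 : t = 0 := by omega
    obtain ⟨x, y, hxy⟩ := hnc
    apply hxy
    rw [hf x, hf y]
    have hx := hwt_le x
    have hy := hwt_le y
    exact ht.1 (wt x) (wt y) (by omega) (by omega) (by omega) (by omega)
  have hn0 : (0:ℝ) < n := by
    have : (0:ℕ) < n := by omega
    exact_mod_cast this
  have ht0R : (0:ℝ) < t := by
    have : (0:ℕ) < t := by omega
    exact_mod_cast this
  set A := Real.sqrt ((n : ℝ) / t) with hAdef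
  set B := Real.sqrt ((t : ℝ) / n) with hBdef
  have hA0 : 0 ≤ A := Real.sqrt_nonneg _
  have hB0 : 0 ≤ B := Real.sqrt_nonneg _
  have hAB : A * B = 1 := by
    rw [hAdef, hBdef, ← Real.sqrt_mul (by positivity),
      show (n:ℝ)/t * ((t:ℝ)/n) = 1 by field_simp]
    exact Real.sqrt_one
  have hBB : B * B = (t:ℝ)/n := Real.mul_self_sqrt (by positivity)
  have hAA : A * A = (n:ℝ)/t := Real.mul_self_sqrt (by positivity)
  have htA : (t:ℝ) * A = Real.sqrt ((t:ℝ) * n) := by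
    have h1 : ((t:ℝ) * A)^2 = (t:ℝ) * n := by
      have : A^2 = (n:ℝ)/t := by rw [sq]; exact hAA
      rw [mul_pow, this]; field_simp
    calc (t:ℝ) * A = Real.sqrt (((t:ℝ) * A)^2) :=
          (Real.sqrt_sq (mul_nonneg ht0R.le hA0)).symm
      _ = Real.sqrt ((t:ℝ) * n) := by rw [h1]
  have hnB : (n:ℝ) * B = Real.sqrt ((t:ℝ) * n) := by
    have h1 : ((n:ℝ) * B)^2 = (t:ℝ) * n := by
      have : B^2 = (t:ℝ)/n := by rw [sq]; exact hBB
      rw [mul_pow, this]; field_simp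
    calc (n:ℝ) * B = Real.sqrt (((n:ℝ) * B)^2) :=
          (Real.sqrt_sq (mul_nonneg hn0.le hB0)).symm
      _ = Real.sqrt ((t:ℝ) * n) := by rw [h1]
  -- nonnegativity of weights
  have hw0 : ∀ x i, 0 ≤ w x i := by
    intro x i
    rcases Nat.lt_or_ge (wt x) t with h | h
    · rw [hleft x h i]; split_ifs; exacts [hA0, hB0]
    · rcases le_or_gt (wt x) (n - t) with h2 | h2
      · obtain ⟨S1, S0, _, _, _, _, hw⟩ := hmid x h h2
        rw [hw i]; split_ifs; exacts [hA0, le_refl 0]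
      · rw [hright x h2 i]; split_ifs; exacts [hB0, hA0]
  -- product helper
  have prodNe : ∀ (a b : ℝ) (u v : Bool), u ≠ v → a * b = 1 →
      (if u then a else b) * (if v then a else b) = 1 := by
    intro a b u v huv hab
    cases u <;> cases v
    · exact absurd rfl huv
    · simpa [mul_comm] using hab
    · simpa using hab
    · exact absurd rfl huv
  -- symmetry of the sum
  have hsym : ∀ x y : Fin n → Bool,
      ∑ i ∈ univ.filter (fun i => x i ≠ y i), w x i * w y i
      = ∑ i ∈ univ.filter (fun i => y i ≠ x i), w y i * w x i := by
    intro x y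
    rw [show (univ.filter (fun i => x i ≠ y i)) = (univ.filter (fun i => y i ≠ x i)) from
      Finset.filter_congr (fun i _ => ne_comm)]
    exact Finset.sum_congr rfl fun i _ => mul_comm _ _
  -- the key asymmetric feasibility lemma
  have key : ∀ x y : Fin n → Bool, f x ≠ f y → wt x ≤ wt y →
      1 ≤ ∑ i ∈ univ.filter (fun i => x i ≠ y i), w x i * w y i := by
    intro x y hfxy hxy
    have hterm0 : ∀ i ∈ univ.filter (fun i => x i ≠ y i), 0 ≤ w x i * w y i :=
      fun i _ => mul_nonneg (hw0 x i) (hw0 y i)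
    have single : ∀ i : Fin n, x i ≠ y i → 1 ≤ w x i * w y i →
        1 ≤ ∑ j ∈ univ.filter (fun j => x j ≠ y j), w x j * w y j := by
      intro i hi h1
      calc (1:ℝ) ≤ w x i * w y i := h1
        _ ≤ _ := Finset.single_le_sum hterm0 (by simp [hi])
    rcases Nat.lt_or_ge (wt x) t with hxL | hxM
    · -- x in the left region
      rcases Nat.lt_or_ge (wt y) t with hyL | hyM
      · -- both left
        have hne : x ≠ y := fun h => hfxy (by rw [h])
        obtain ⟨i, hi⟩ : ∃ i, x i ≠ y i := by
          by_contra h; push_neg at h; exact hne (funext h)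
        apply single i hi
        rw [hleft x hxL i, hleft y hyL i]
        exact (prodNe A B (x i) (y i) hi hAB).ge
      · rcases le_or_gt (wt y) (n - t) with hyM2 | hyR
        · -- x left, y middle
          obtain ⟨S1, S0, hS1card, hS0card, hS1, hS0, hwy⟩ := hmid y hyM hyM2
          obtain ⟨i, hiS1, hxi⟩ : ∃ i ∈ S1, x i = false := by
            by_contra h
            push_neg at h
            have hsub : S1 ⊆ univ.filter (fun i => x i = true) := by
              intro i hi
              simp only [Finset.mem_filter, Finset.mem_univ, true_and]
              have := h i hi
              revert this; cases x i <;> simp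
            have := Finset.card_le_card hsub
            rw [hS1card] at this
            have : t ≤ wt x := this
            omega
          have hyi : y i = true := hS1 i hiS1
          apply single i (by simp [hxi, hyi])
          have h1 : w x i = B := by rw [hleft x hxL i, hxi]; simp
          have h2 : w y i = A := by
            rw [hwy i, if_pos (Finset.mem_union_left _ hiS1)]
          rw [h1, h2, mul_comm]
          exact hAB.ge
        · -- x left, y right : counting argument
          set Bs := univ.filter (fun i => x i = false ∧ y i = true) with hBs
          have hsub : Bs ⊆ univ.filter (fun i => x i ≠ y i) := by
            intro i hi
            simp only [hBs, Finset.mem_filter, Finset.mem_univ, true_and] at hi ⊢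
            simp [hi.1, hi.2]
          have hterm : ∀ i ∈ Bs, w x i * w y i = (t:ℝ)/n := by
            intro i hi
            simp only [hBs, Finset.mem_filter, Finset.mem_univ, true_and] at hi
            have h1 : w x i = B := by rw [hleft x hxL i, hi.1]; simp
            have h2 : w y i = B := by rw [hright y hyR i, hi.2]; simp
            rw [h1, h2, hBB]
          have hcard : wt y ≤ wt x + Bs.card := by
            have hss : univ.filter (fun i => y i = true) ⊆
                univ.filter (fun i => x i = true) ∪ Bs := by
              intro i hi
              simp only [Finset.mem_filter, Finset.mem_univ, true_and] at hi
              rcases Bool.eq_false_or_eq_true (x i) with hxi | hxi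
              · exact Finset.mem_union_left _ (by simp [hxi])
              · exact Finset.mem_union_right _ (by simp [hBs, hxi, hi])
            calc wt y ≤ (univ.filter (fun i => x i = true) ∪ Bs).card :=
                  Finset.card_le_card hss
              _ ≤ wt x + Bs.card := Finset.card_union_le _ _
          have hcard2 : n + 2 ≤ 2 * t + Bs.card := by
            have := hwt_le y
            omega
          have hBsR : (n:ℝ) ≤ (Bs.card : ℝ) * t := by
            have h1 : (1:ℝ) ≤ t := by exact_mod_cast ht1
            have h2 : 2 * (t:ℝ) ≤ n := by exact_mod_cast htn
            have h3 : (n:ℝ) + 2 ≤ 2 * t + Bs.card := by exact_mod_cast hcard2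
            have h4 : (0:ℝ) ≤ ((t:ℝ) - 1) * ((n:ℝ) - 2*t) :=
              mul_nonneg (by linarith) (by linarith)
            have h5 : (0:ℝ) ≤ (t:ℝ) * ((Bs.card:ℝ) + 2*t - n - 2) :=
              mul_nonneg (by linarith) (by linarith)
            nlinarith [h4, h5]
          calc (1:ℝ) ≤ (Bs.card : ℝ) * ((t:ℝ)/n) := by
                rw [show (Bs.card : ℝ) * ((t:ℝ)/n) = ((Bs.card : ℝ) * t)/n by ring]
                exact (one_le_div hn0).mpr hBsR
            _ = ∑ i ∈ Bs, (t:ℝ)/n := by rw [Finset.sum_const, nsmul_eq_mul]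
            _ = ∑ i ∈ Bs, w x i * w y i := (Finset.sum_congr rfl hterm).symm
            _ ≤ ∑ i ∈ univ.filter (fun i => x i ≠ y i), w x i * w y i :=
                Finset.sum_le_sum_of_subset_of_nonneg hsub
                  (fun i _ _ => mul_nonneg (hw0 x i) (hw0 y i))
    · rcases le_or_gt (wt x) (n - t) with hxM2 | hxR
      · -- x middle; y must be right
        have hyR : n - t < wt y := by
          by_contra h
          push_neg at h
          have hyM : t ≤ wt y := le_trans hxM hxy
          exact hfxy (by rw [hf, hf]; exact ht.1 _ _ hxM hxM2 hyM h)
        obtain ⟨S1, S0, hS1card, hS0card, hS1, hS0, hwx⟩ := hmid x hxM hxM2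
        obtain ⟨i, hiS0, hyi⟩ : ∃ i ∈ S0, y i = true := by
          by_contra h
          push_neg at h
          have hsub : S0 ⊆ univ.filter (fun i => ¬ y i = true) := by
            intro i hi
            simp only [Finset.mem_filter, Finset.mem_univ, true_and]
            exact h i hi
          have h1 : S0.card ≤ (univ.filter (fun i => ¬ y i = true)).card :=
            Finset.card_le_card hsub
          have h2 : (univ.filter (fun i => y i = true)).card +
              (univ.filter (fun i => ¬ y i = true)).card = n := by
            rw [Finset.card_filter_add_card_filter_not]
            simp
          have h3 : (univ.filter (fun i => y i = true)).card = wt y := rfl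
          have := hwt_le y
          omega
        have hxi : x i = false := hS0 i hiS0
        apply single i (by simp [hxi, hyi])
        have h1 : w x i = A := by
          rw [hwx i, if_pos (Finset.mem_union_right _ hiS0)]
        have h2 : w y i = B := by rw [hright y hyR i, hyi]; simp
        rw [h1, h2]
        exact hAB.ge
      · -- x right, so y right
        have hyR : n - t < wt y := lt_of_lt_of_le hxR hxy
        have hne : x ≠ y := fun h => hfxy (by rw [h])
        obtain ⟨i, hi⟩ : ∃ i, x i ≠ y i := by
          by_contra h; push_neg at h; exact hne (funext h)
        apply single i hi
        rw [hright x hxR i, hright y hyR i]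
        exact (prodNe B A (x i) (y i) hi (by rw [mul_comm]; exact hAB)).ge
  have hfeas : ∀ x y : Fin n → Bool, f x ≠ f y →
      1 ≤ ∑ i ∈ univ.filter (fun i => x i ≠ y i), w x i * w y i := by
    intro x y hfxy
    rcases Nat.le_total (wt x) (wt y) with h | h
    · exact key x y hfxy h
    · rw [hsym x y]; exact key y x (Ne.symm hfxy) h
  -- the max bound
  have hmax : ∀ x, ∑ i, w x i ≤ 3 * Real.sqrt ((t:ℝ) * n) := by
    intro x
    have hsq : 0 ≤ Real.sqrt ((t:ℝ)*n) := Real.sqrt_nonneg _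
    have hcardn : ((univ.filter (fun i => ¬ x i = true)).card : ℕ) + wt x = n := by
      have h2 : (univ.filter (fun i => x i = true)).card +
          (univ.filter (fun i => ¬ x i = true)).card = n := by
        rw [Finset.card_filter_add_card_filter_not]
        simp
      have h3 : (univ.filter (fun i => x i = true)).card = wt x := rfl
      omega
    rcases Nat.lt_or_ge (wt x) t with hxL | hxM
    · -- left
      have e1 : ∀ i ∈ univ.filter (fun i => x i = true), w x i = A := by
        intro i hi
        rw [hleft x hxL i, (Finset.mem_filter.mp hi).2]; simp
      have e2 : ∀ i ∈ univ.filter (fun i => ¬ x i = true), w x i = B := by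
        intro i hi
        rw [hleft x hxL i, if_neg (Finset.mem_filter.mp hi).2]
      have hsplit : ∑ i, w x i = (wt x : ℝ) * A +
          ((univ.filter (fun i => ¬ x i = true)).card : ℝ) * B := by
        rw [← Finset.sum_filter_add_sum_filter_not univ (fun i => x i = true) (fun i => w x i),
          Finset.sum_congr rfl e1, Finset.sum_congr rfl e2,
          Finset.sum_const, Finset.sum_const, nsmul_eq_mul, nsmul_eq_mul]
        rfl
      rw [hsplit]
      have c1 : (wt x : ℝ) ≤ t := by exact_mod_cast hxL.le
      have c2 : ((univ.filter (fun i => ¬ x i = true)).card : ℝ) ≤ n := by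
        exact_mod_cast (by omega : (univ.filter (fun i => ¬ x i = true)).card ≤ n)
      calc (wt x:ℝ) * A + ((univ.filter (fun i => ¬ x i = true)).card : ℝ) * B
          ≤ (t:ℝ)*A + (n:ℝ)*B :=
            add_le_add (mul_le_mul_of_nonneg_right c1 hA0)
              (mul_le_mul_of_nonneg_right c2 hB0)
        _ = 2 * Real.sqrt ((t:ℝ)*n) := by rw [htA, hnB]; ring
        _ ≤ 3 * Real.sqrt ((t:ℝ)*n) := by linarith
    · rcases le_or_gt (wt x) (n - t) with hxM2 | hxR
      · -- middle
        obtain ⟨S1, S0, hS1card, hS0card, hS1, hS0, hwx⟩ := hmid x hxM hxM2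
        have hsplit : ∑ i, w x i = ((S1 ∪ S0).card : ℝ) * A := by
          rw [Finset.sum_congr rfl (fun i _ => hwx i), Finset.sum_ite_mem,
            Finset.univ_inter, Finset.sum_const, nsmul_eq_mul]
        rw [hsplit]
        have hc : ((S1 ∪ S0).card : ℝ) ≤ 2 * t := by
          exact_mod_cast (Finset.card_union_le S1 S0).trans (by omega)
        calc ((S1∪S0).card:ℝ) * A ≤ (2*(t:ℝ)) * A :=
              mul_le_mul_of_nonneg_right hc hA0
          _ = 2 * Real.sqrt ((t:ℝ)*n) := by rw [mul_assoc, htA]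
          _ ≤ 3 * Real.sqrt ((t:ℝ)*n) := by linarith
      · -- right
        have e1 : ∀ i ∈ univ.filter (fun i => x i = true), w x i = B := by
          intro i hi
          rw [hright x hxR i, (Finset.mem_filter.mp hi).2]; simp
        have e2 : ∀ i ∈ univ.filter (fun i => ¬ x i = true), w x i = A := by
          intro i hi
          rw [hright x hxR i, if_neg (Finset.mem_filter.mp hi).2]
        have hsplit : ∑ i, w x i = (wt x : ℝ) * B +
            ((univ.filter (fun i => ¬ x i = true)).card : ℝ) * A := by
          rw [← Finset.sum_filter_add_sum_filter_not univ (fun i => x i = true) (fun i => w x i),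
            Finset.sum_congr rfl e1, Finset.sum_congr rfl e2,
            Finset.sum_const, Finset.sum_const, nsmul_eq_mul, nsmul_eq_mul]
          rfl
        rw [hsplit]
        have c1 : (wt x : ℝ) ≤ n := by exact_mod_cast hwt_le x
        have c2 : ((univ.filter (fun i => ¬ x i = true)).card : ℝ) ≤ t := by
          have := hwt_le x
          exact_mod_cast (by omega : (univ.filter (fun i => ¬ x i = true)).card ≤ t)
        calc (wt x:ℝ) * B + ((univ.filter (fun i => ¬ x i = true)).card : ℝ) * A
            ≤ (n:ℝ)*B + (t:ℝ)*A :=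
              add_le_add (mul_le_mul_of_nonneg_right c1 hB0)
                (mul_le_mul_of_nonneg_right c2 hA0)
          _ = 2 * Real.sqrt ((t:ℝ)*n) := by rw [htA, hnB]; ring
          _ ≤ 3 * Real.sqrt ((t:ℝ)*n) := by linarith
  refine ⟨hfeas, ?_⟩
  have hmem : 3 * Real.sqrt ((t:ℝ)*n) ∈ {r : ℝ | ∃ w : (Fin n → Bool) → Fin n → ℝ,
      (∀ x i, 0 ≤ w x i) ∧
      (∀ x y : Fin n → Bool, f x ≠ f y →
        1 ≤ ∑ i ∈ univ.filter (fun i => x i ≠ y i), w x i * w y i) ∧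
      (∀ x, ∑ i, w x i ≤ r)} := ⟨w, hw0, hfeas, hmax⟩
  have hbdd : BddBelow {r : ℝ | ∃ w : (Fin n → Bool) → Fin n → ℝ,
      (∀ x i, 0 ≤ w x i) ∧
      (∀ x y : Fin n → Bool, f x ≠ f y →
        1 ≤ ∑ i ∈ univ.filter (fun i => x i ≠ y i), w x i * w y i) ∧
      (∀ x, ∑ i, w x i ≤ r)} := by
    refine ⟨0, ?_⟩
    rintro r ⟨w', hw0', -, hmax'⟩
    have h0 : 0 ≤ ∑ i, w' (fun _ => false) i :=
      Finset.sum_nonneg (fun i _ => hw0' _ i)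
    linarith [hmax' (fun _ => false)]
  exact csInf_le hbdd hmem
end
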